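/- Let n ≥ 1, z, u ∈ ℂ^n, and for p, q ∈ ℕ define the polynomial function f_{p,q}(s,t) = ⟨z, conj(t+s)⟩^p·⟨z̄, t−s⟩^q·⟨u, conj(t−s)⟩^q·⟨ū, t+s⟩^p/(p!·q!·q!·p!) of (s,t) ∈ ℂ^n × ℂ^n ≅ ℝ^{2n} × ℝ^{2n}, where ⟨a, b⟩ = ∑_{j=1}^n a_j b_j, ⟨z̄, w⟩ = ∑_j conj(z_j)·w_j and ⟨z, conj(w)⟩ = ∑_j z_j·conj(w_j). Then for all p, q ≥ 1: I₁ f_{p,q} = 8·(⟨z,ū⟩·f_{p−1,q} + ⟨z̄,u⟩·f_{p,q−1}) and I₂ f_{p,q} = 64·(|⟨z,ū⟩|² − ‖z‖²‖u‖²)·f_{p−1,q−1}, where ⟨z,ū⟩ = ∑_j z_j·conj(u_j), ⟨z̄,u⟩ = conj(⟨z,ū⟩) and ‖z‖² = ∑_j |z_j|². -/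

import Mathlib

open MvPolynomial

noncomputable section

/-- The inclusion `Fin n → Fin (2n)`, `j ↦ j`. -/
def il (n : ℕ) (j : Fin n) : Fin (2 * n) := ⟨j.1, by have := j.2; omega⟩

/-- The inclusion `Fin n → Fin (2n)`, `j ↦ n + j`. -/
def ir (n : ℕ) (j : Fin n) : Fin (2 * n) := ⟨n + j.1, by have := j.2; omega⟩

/-- The identification `ℂ^n ≅ ℝ^{2n}`, `z = a + ib ↦ (a, b)`. -/
def reIm (n : ℕ) (c : Fin n → ℂ) : Fin (2 * n) → ℝ :=
  fun i => if h : i.1 < n then (c ⟨i.1, h⟩).re else (c ⟨i.1 - n, by have := i.2; omega⟩).im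

/-- `I₁ = Δ_v + Δ_w` on polynomials in the real variables `(v,w) ∈ ℝ^{2n} × ℝ^{2n}`
(`Sum.inl i = v_i`, `Sum.inr i = w_i`). -/
def I1op (n : ℕ) (F : MvPolynomial (Fin (2 * n) ⊕ Fin (2 * n)) ℂ) :
    MvPolynomial (Fin (2 * n) ⊕ Fin (2 * n)) ℂ :=
  ∑ i : Fin (2 * n),
    (pderiv (Sum.inl i) (pderiv (Sum.inl i) F) + pderiv (Sum.inr i) (pderiv (Sum.inr i) F))

/-- The Laplacian in the `v`-variables. -/
def lapV (n : ℕ) (F : MvPolynomial (Fin (2 * n) ⊕ Fin (2 * n)) ℂ) :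
    MvPolynomial (Fin (2 * n) ⊕ Fin (2 * n)) ℂ :=
  ∑ i : Fin (2 * n), pderiv (Sum.inl i) (pderiv (Sum.inl i) F)

/-- The Laplacian in the `w`-variables. -/
def lapW (n : ℕ) (F : MvPolynomial (Fin (2 * n) ⊕ Fin (2 * n)) ℂ) :
    MvPolynomial (Fin (2 * n) ⊕ Fin (2 * n)) ℂ :=
  ∑ i : Fin (2 * n), pderiv (Sum.inr i) (pderiv (Sum.inr i) F)

/-- The mixed operator `⟨∇_w,∇_v⟩ = ∑_i ∂_{w_i} ∂_{v_i}`. -/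
def mixedOp (n : ℕ) (F : MvPolynomial (Fin (2 * n) ⊕ Fin (2 * n)) ℂ) :
    MvPolynomial (Fin (2 * n) ⊕ Fin (2 * n)) ℂ :=
  ∑ i : Fin (2 * n), pderiv (Sum.inr i) (pderiv (Sum.inl i) F)

/-- The twisted mixed operator `⟨∇_w, J ∇_v⟩ = ∑_{j<n} (∂_{w_j} ∂_{v_{n+j}} − ∂_{w_{n+j}} ∂_{v_j})`,
with `J = [[0, I_n], [−I_n, 0]]`. -/
def mixedJOp (n : ℕ) (F : MvPolynomial (Fin (2 * n) ⊕ Fin (2 * n)) ℂ) :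
    MvPolynomial (Fin (2 * n) ⊕ Fin (2 * n)) ℂ :=
  ∑ j : Fin n,
    (pderiv (Sum.inr (il n j)) (pderiv (Sum.inl (ir n j)) F)
      - pderiv (Sum.inr (ir n j)) (pderiv (Sum.inl (il n j)) F))

/-- `I₂ = Δ_w Δ_v − ⟨∇_w,∇_v⟩² − ⟨∇_w, J∇_v⟩²`. -/
def I2op (n : ℕ) (F : MvPolynomial (Fin (2 * n) ⊕ Fin (2 * n)) ℂ) :
    MvPolynomial (Fin (2 * n) ⊕ Fin (2 * n)) ℂ :=
  lapW n (lapV n F) - mixedOp n (mixedOp n F) - mixedJOp n (mixedJOp n F)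

/-- The complex coordinate `s_j = v_j + i v_{n+j}` as a polynomial in the real variables. -/
def sVar (n : ℕ) (j : Fin n) : MvPolynomial (Fin (2 * n) ⊕ Fin (2 * n)) ℂ :=
  X (Sum.inl (il n j)) + C Complex.I * X (Sum.inl (ir n j))

/-- The complex coordinate `t_j = w_j + i w_{n+j}` as a polynomial in the real variables. -/
def tVar (n : ℕ) (j : Fin n) : MvPolynomial (Fin (2 * n) ⊕ Fin (2 * n)) ℂ :=
  X (Sum.inr (il n j)) + C Complex.I * X (Sum.inr (ir n j))

/-- `conj s_j = v_j − i v_{n+j}`. -/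
def sVarBar (n : ℕ) (j : Fin n) : MvPolynomial (Fin (2 * n) ⊕ Fin (2 * n)) ℂ :=
  X (Sum.inl (il n j)) - C Complex.I * X (Sum.inl (ir n j))

/-- `conj t_j = w_j − i w_{n+j}`. -/
def tVarBar (n : ℕ) (j : Fin n) : MvPolynomial (Fin (2 * n) ⊕ Fin (2 * n)) ℂ :=
  X (Sum.inr (il n j)) - C Complex.I * X (Sum.inr (ir n j))

/-- The plane wave polynomial
`f_{p,q}(s,t) = ⟨z,conj(t+s)⟩^p ⟨z̄,t−s⟩^q ⟨u,conj(t−s)⟩^q ⟨ū,t+s⟩^p / (p! q! q! p!)`. -/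
def fpq (n : ℕ) (z u : Fin n → ℂ) (p q : ℕ) : MvPolynomial (Fin (2 * n) ⊕ Fin (2 * n)) ℂ :=
  C (((p.factorial : ℂ) * (q.factorial : ℂ) * (q.factorial : ℂ) * (p.factorial : ℂ))⁻¹) *
    (∑ j : Fin n, C (z j) * (tVarBar n j + sVarBar n j)) ^ p *
    (∑ j : Fin n, C ((starRingEnd ℂ) (z j)) * (tVar n j - sVar n j)) ^ q *
    (∑ j : Fin n, C (u j) * (tVarBar n j - sVarBar n j)) ^ q *
    (∑ j : Fin n, C ((starRingEnd ℂ) (u j)) * (tVar n j + sVar n j)) ^ p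


/- ===== auxiliary machinery ===== -/

lemma pderiv_aeval_eq {σ τ : Type*} [Fintype τ] [DecidableEq σ] [DecidableEq τ]
    (f : τ → MvPolynomial σ ℂ) (x : σ) (c : τ → ℂ)
    (h : ∀ i, pderiv x (f i) = C (c i)) (g : MvPolynomial τ ℂ) :
    pderiv x (aeval f g) = ∑ i, C (c i) * aeval f (pderiv i g) := by
  induction g using MvPolynomial.induction_on with
  | C a => simp
  | add p q hp hq =>
      simp only [map_add, hp, hq, mul_add, Finset.sum_add_distrib]
  | mul_X p i hp =>
      rw [map_mul, aeval_X, pderiv_mul, hp, h]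
      have key : ∀ j : τ, C (c j) * aeval f (pderiv j (p * X i))
          = C (c j) * aeval f (pderiv j p) * f i
            + (if j = i then C (c i) * aeval f p else 0) := by
        intro j
        rw [pderiv_mul, map_add, map_mul, aeval_X, mul_add]
        congr 1
        · ring
        · by_cases hj : j = i
          · subst hj; simp [mul_comm]
          · simp [pderiv_X_of_ne (fun hh : (i : τ) = j => hj hh.symm), hj]
      simp only [key]
      rw [Finset.sum_add_distrib, Finset.sum_ite_eq' Finset.univ i, Finset.sum_mul]
      simp [mul_comm]

lemma pderiv2_aeval_eq {σ τ : Type*} [Fintype τ] [DecidableEq σ] [DecidableEq τ]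
    (f : τ → MvPolynomial σ ℂ) (x y : σ) (cx cy : τ → ℂ)
    (hx : ∀ i, pderiv x (f i) = C (cx i)) (hy : ∀ i, pderiv y (f i) = C (cy i))
    (g : MvPolynomial τ ℂ) :
    pderiv y (pderiv x (aeval f g))
      = ∑ a, ∑ b, C (cx a * cy b) * aeval f (pderiv b (pderiv a g)) := by
  rw [pderiv_aeval_eq f x cx hx g, map_sum]
  refine Finset.sum_congr rfl fun a _ => ?_
  rw [pderiv_C_mul, pderiv_aeval_eq f y cy hy (pderiv a g), Finset.mul_sum]
  exact Finset.sum_congr rfl fun b _ => by rw [← mul_assoc, ← map_mul]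

lemma collect {σ' : Type*} (n : ℕ) (e : Fin n → Fin 4 → Fin 4 → ℂ)
    (G : Fin 4 → Fin 4 → MvPolynomial σ' ℂ) :
    (∑ j : Fin n, ∑ a, ∑ b, C (e j a b) * G a b)
      = ∑ a, ∑ b, C (∑ j, e j a b) * G a b := by
  rw [Finset.sum_comm]
  refine Finset.sum_congr rfl fun a _ => ?_
  rw [Finset.sum_comm]
  refine Finset.sum_congr rfl fun b _ => ?_
  rw [map_sum, Finset.sum_mul]

lemma sum_fin2n {M : Type*} [AddCommMonoid M] (n : ℕ) (h : Fin (2 * n) → M) :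
    ∑ i, h i = ∑ j : Fin n, (h (il n j) + h (ir n j)) := by
  rw [Finset.sum_add_distrib]
  rw [← Fintype.sum_equiv (finSumFinEquiv.trans (finCongr (by omega : n + n = 2 * n)))
      (fun x => h ((finSumFinEquiv.trans (finCongr (by omega : n + n = 2 * n))) x)) h
      (fun x => rfl), Fintype.sum_sum_type]
  first
  | rfl
  | (congr 1 <;> exact Finset.sum_congr rfl fun j _ => by congr 1; ext; simp [il, ir])

lemma pderiv_pderiv_comm {σ : Type*} [DecidableEq σ] (i j : σ) (f : MvPolynomial σ ℂ) :
    pderiv i (pderiv j f) = pderiv j (pderiv i f) := by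
  induction f using MvPolynomial.induction_on with
  | C a => simp
  | add p q hp hq => simp [hp, hq]
  | mul_X p k hp =>
      simp only [pderiv_mul, map_add, hp]
      have e1 : ∀ a b : σ, pderiv a (pderiv b (X k : MvPolynomial σ ℂ)) = 0 := by
        intro a b
        rcases eq_or_ne k b with rfl | hbk
        · simp
        · rw [pderiv_X_of_ne hbk]; simp
      rw [e1, e1]
      ring

lemma sum_pair_eq {n : ℕ} (e w : Fin n → ℂ) (c : ℂ) (h : ∀ j, e j = c * w j) :
    ∑ j, e j = c * ∑ j, w j := by
  rw [Finset.mul_sum]; exact Finset.sum_congr rfl fun j _ => h j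

@[simp] lemma il_inj_iff {n : ℕ} {j k : Fin n} : il n j = il n k ↔ j = k := by
  simp [il, Fin.ext_iff]
@[simp] lemma ir_inj_iff {n : ℕ} {j k : Fin n} : ir n j = ir n k ↔ j = k := by
  simp [ir, Fin.ext_iff]
@[simp] lemma il_ne_ir {n : ℕ} {j k : Fin n} : il n j ≠ ir n k := by
  simp [il, ir, Fin.ext_iff]; have := j.2; omega
@[simp] lemma ir_ne_il {n : ℕ} {j k : Fin n} : ir n j ≠ il n k := by
  simp [il, ir, Fin.ext_iff]; have := k.2; omega

def gens (n : ℕ) (z u : Fin n → ℂ) : Fin 4 → MvPolynomial (Fin (2 * n) ⊕ Fin (2 * n)) ℂ :=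
  ![∑ j : Fin n, C (z j) * (tVarBar n j + sVarBar n j),
    ∑ j : Fin n, C ((starRingEnd ℂ) (z j)) * (tVar n j - sVar n j),
    ∑ j : Fin n, C (u j) * (tVarBar n j - sVarBar n j),
    ∑ j : Fin n, C ((starRingEnd ℂ) (u j)) * (tVar n j + sVar n j)]

def cVL (n : ℕ) (z u : Fin n → ℂ) (j : Fin n) : Fin 4 → ℂ :=
  ![z j, -(starRingEnd ℂ) (z j), -(u j), (starRingEnd ℂ) (u j)]
def cVR (n : ℕ) (z u : Fin n → ℂ) (j : Fin n) : Fin 4 → ℂ :=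
  ![-(Complex.I * z j), -(Complex.I * (starRingEnd ℂ) (z j)),
    Complex.I * u j, Complex.I * (starRingEnd ℂ) (u j)]
def cWL (n : ℕ) (z u : Fin n → ℂ) (j : Fin n) : Fin 4 → ℂ :=
  ![z j, (starRingEnd ℂ) (z j), u j, (starRingEnd ℂ) (u j)]
def cWR (n : ℕ) (z u : Fin n → ℂ) (j : Fin n) : Fin 4 → ℂ :=
  ![-(Complex.I * z j), Complex.I * (starRingEnd ℂ) (z j),
    -(Complex.I * u j), Complex.I * (starRingEnd ℂ) (u j)]

lemma pd_vl (n : ℕ) (z u : Fin n → ℂ) (j : Fin n) (i : Fin 4) :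
    pderiv (Sum.inl (il n j)) (gens n z u i) = C (cVL n z u j i) := by
  fin_cases i <;>
    simp [gens, cVL, sVar, tVar, sVarBar, tVarBar, pderiv_C_mul, Pi.single_apply,
      Finset.sum_ite_eq', map_sum, eq_comm, sub_eq_add_neg, mul_add] <;> try ring

lemma pd_vr (n : ℕ) (z u : Fin n → ℂ) (j : Fin n) (i : Fin 4) :
    pderiv (Sum.inl (ir n j)) (gens n z u i) = C (cVR n z u j i) := by
  fin_cases i <;>
    simp [gens, cVR, sVar, tVar, sVarBar, tVarBar, pderiv_C_mul, Pi.single_apply,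
      Finset.sum_ite_eq', map_sum, eq_comm, sub_eq_add_neg, mul_add] <;> try ring

lemma pd_wl (n : ℕ) (z u : Fin n → ℂ) (j : Fin n) (i : Fin 4) :
    pderiv (Sum.inr (il n j)) (gens n z u i) = C (cWL n z u j i) := by
  fin_cases i <;>
    simp [gens, cWL, sVar, tVar, sVarBar, tVarBar, pderiv_C_mul, Pi.single_apply,
      Finset.sum_ite_eq', map_sum, eq_comm, sub_eq_add_neg, mul_add] <;> try ring

lemma pd_wr (n : ℕ) (z u : Fin n → ℂ) (j : Fin n) (i : Fin 4) :
    pderiv (Sum.inr (ir n j)) (gens n z u i) = C (cWR n z u j i) := by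
  fin_cases i <;>
    simp [gens, cWR, sVar, tVar, sVarBar, tVarBar, pderiv_C_mul, Pi.single_apply,
      Finset.sum_ite_eq', map_sum, eq_comm, sub_eq_add_neg, mul_add] <;> try ring

def LV (Z U ζ ζ' : ℂ) (g : MvPolynomial (Fin 4) ℂ) : MvPolynomial (Fin 4) ℂ :=
  C (-4*Z) * pderiv 1 (pderiv 0 g) + C (4*ζ) * pderiv 3 (pderiv 0 g)
  + C (4*ζ') * pderiv 2 (pderiv 1 g) + C (-4*U) * pderiv 3 (pderiv 2 g)

def LW (Z U ζ ζ' : ℂ) (g : MvPolynomial (Fin 4) ℂ) : MvPolynomial (Fin 4) ℂ :=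
  C (4*Z) * pderiv 1 (pderiv 0 g) + C (4*ζ) * pderiv 3 (pderiv 0 g)
  + C (4*ζ') * pderiv 2 (pderiv 1 g) + C (4*U) * pderiv 3 (pderiv 2 g)

def LM (ζ ζ' : ℂ) (g : MvPolynomial (Fin 4) ℂ) : MvPolynomial (Fin 4) ℂ :=
  C (4*ζ) * pderiv 3 (pderiv 0 g) + C (-4*ζ') * pderiv 2 (pderiv 1 g)

def LJ (Z U : ℂ) (g : MvPolynomial (Fin 4) ℂ) : MvPolynomial (Fin 4) ℂ :=
  C (-4*Complex.I*Z) * pderiv 1 (pderiv 0 g) + C (4*Complex.I*U) * pderiv 3 (pderiv 2 g)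

lemma lapV_bridge (n : ℕ) (z u : Fin n → ℂ) (g : MvPolynomial (Fin 4) ℂ) :
    lapV n (aeval (gens n z u) g)
      = aeval (gens n z u) (LV (∑ j, z j * (starRingEnd ℂ) (z j)) (∑ j, u j * (starRingEnd ℂ) (u j)) (∑ j, z j * (starRingEnd ℂ) (u j)) (∑ j, (starRingEnd ℂ) (z j) * u j) g) := by
  have kV00 : (∑ j, (cVL n z u j 0 * cVL n z u j 0 + cVR n z u j 0 * cVR n z u j 0)) = 0 :=
    Finset.sum_eq_zero (fun j _ => by simp [cVL, cVR, cWL, cWR]; try ring_nf; try simp [Complex.I_sq]; try ring)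
  have kV01 : (∑ j, (cVL n z u j 0 * cVL n z u j 1 + cVR n z u j 0 * cVR n z u j 1)) = (-2) * (∑ j, z j * (starRingEnd ℂ) (z j)) :=
    sum_pair_eq _ _ _ (fun j => by simp [cVL, cVR, cWL, cWR]; try ring_nf; try simp [Complex.I_sq]; try ring)
  have kV02 : (∑ j, (cVL n z u j 0 * cVL n z u j 2 + cVR n z u j 0 * cVR n z u j 2)) = 0 :=
    Finset.sum_eq_zero (fun j _ => by simp [cVL, cVR, cWL, cWR]; try ring_nf; try simp [Complex.I_sq]; try ring)
  have kV03 : (∑ j, (cVL n z u j 0 * cVL n z u j 3 + cVR n z u j 0 * cVR n z u j 3)) = (2) * (∑ j, z j * (starRingEnd ℂ) (u j)) :=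
    sum_pair_eq _ _ _ (fun j => by simp [cVL, cVR, cWL, cWR]; try ring_nf; try simp [Complex.I_sq]; try ring)
  have kV10 : (∑ j, (cVL n z u j 1 * cVL n z u j 0 + cVR n z u j 1 * cVR n z u j 0)) = (-2) * (∑ j, z j * (starRingEnd ℂ) (z j)) :=
    sum_pair_eq _ _ _ (fun j => by simp [cVL, cVR, cWL, cWR]; try ring_nf; try simp [Complex.I_sq]; try ring)
  have kV11 : (∑ j, (cVL n z u j 1 * cVL n z u j 1 + cVR n z u j 1 * cVR n z u j 1)) = 0 :=
    Finset.sum_eq_zero (fun j _ => by simp [cVL, cVR, cWL, cWR]; try ring_nf; try simp [Complex.I_sq]; try ring)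
  have kV12 : (∑ j, (cVL n z u j 1 * cVL n z u j 2 + cVR n z u j 1 * cVR n z u j 2)) = (2) * (∑ j, (starRingEnd ℂ) (z j) * u j) :=
    sum_pair_eq _ _ _ (fun j => by simp [cVL, cVR, cWL, cWR]; try ring_nf; try simp [Complex.I_sq]; try ring)
  have kV13 : (∑ j, (cVL n z u j 1 * cVL n z u j 3 + cVR n z u j 1 * cVR n z u j 3)) = 0 :=
    Finset.sum_eq_zero (fun j _ => by simp [cVL, cVR, cWL, cWR]; try ring_nf; try simp [Complex.I_sq]; try ring)
  have kV20 : (∑ j, (cVL n z u j 2 * cVL n z u j 0 + cVR n z u j 2 * cVR n z u j 0)) = 0 :=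
    Finset.sum_eq_zero (fun j _ => by simp [cVL, cVR, cWL, cWR]; try ring_nf; try simp [Complex.I_sq]; try ring)
  have kV21 : (∑ j, (cVL n z u j 2 * cVL n z u j 1 + cVR n z u j 2 * cVR n z u j 1)) = (2) * (∑ j, (starRingEnd ℂ) (z j) * u j) :=
    sum_pair_eq _ _ _ (fun j => by simp [cVL, cVR, cWL, cWR]; try ring_nf; try simp [Complex.I_sq]; try ring)
  have kV22 : (∑ j, (cVL n z u j 2 * cVL n z u j 2 + cVR n z u j 2 * cVR n z u j 2)) = 0 :=
    Finset.sum_eq_zero (fun j _ => by simp [cVL, cVR, cWL, cWR]; try ring_nf; try simp [Complex.I_sq]; try ring)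
  have kV23 : (∑ j, (cVL n z u j 2 * cVL n z u j 3 + cVR n z u j 2 * cVR n z u j 3)) = (-2) * (∑ j, u j * (starRingEnd ℂ) (u j)) :=
    sum_pair_eq _ _ _ (fun j => by simp [cVL, cVR, cWL, cWR]; try ring_nf; try simp [Complex.I_sq]; try ring)
  have kV30 : (∑ j, (cVL n z u j 3 * cVL n z u j 0 + cVR n z u j 3 * cVR n z u j 0)) = (2) * (∑ j, z j * (starRingEnd ℂ) (u j)) :=
    sum_pair_eq _ _ _ (fun j => by simp [cVL, cVR, cWL, cWR]; try ring_nf; try simp [Complex.I_sq]; try ring)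
  have kV31 : (∑ j, (cVL n z u j 3 * cVL n z u j 1 + cVR n z u j 3 * cVR n z u j 1)) = 0 :=
    Finset.sum_eq_zero (fun j _ => by simp [cVL, cVR, cWL, cWR]; try ring_nf; try simp [Complex.I_sq]; try ring)
  have kV32 : (∑ j, (cVL n z u j 3 * cVL n z u j 2 + cVR n z u j 3 * cVR n z u j 2)) = (-2) * (∑ j, u j * (starRingEnd ℂ) (u j)) :=
    sum_pair_eq _ _ _ (fun j => by simp [cVL, cVR, cWL, cWR]; try ring_nf; try simp [Complex.I_sq]; try ring)
  have kV33 : (∑ j, (cVL n z u j 3 * cVL n z u j 3 + cVR n z u j 3 * cVR n z u j 3)) = 0 :=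
    Finset.sum_eq_zero (fun j _ => by simp [cVL, cVR, cWL, cWR]; try ring_nf; try simp [Complex.I_sq]; try ring)
  calc lapV n (aeval (gens n z u) g)
      = ∑ j : Fin n, ∑ a, ∑ b, C (cVL n z u j a * cVL n z u j b + cVR n z u j a * cVR n z u j b)
          * aeval (gens n z u) (pderiv b (pderiv a g)) := by
        rw [lapV, sum_fin2n n
          (fun i => pderiv (Sum.inl i) (pderiv (Sum.inl i) (aeval (gens n z u) g)))]
        refine Finset.sum_congr rfl fun j _ => ?_
        rw [pderiv2_aeval_eq _ _ _ _ _ (pd_vl n z u j) (pd_vl n z u j) g,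
            pderiv2_aeval_eq _ _ _ _ _ (pd_vr n z u j) (pd_vr n z u j) g,
            ← Finset.sum_add_distrib]
        refine Finset.sum_congr rfl fun a _ => ?_
        rw [← Finset.sum_add_distrib]
        exact Finset.sum_congr rfl fun b _ => by rw [← add_mul, ← map_add]
    _ = ∑ a, ∑ b, C (∑ j, (cVL n z u j a * cVL n z u j b + cVR n z u j a * cVR n z u j b))
          * aeval (gens n z u) (pderiv b (pderiv a g)) := collect n _ _
    _ = aeval (gens n z u) (LV (∑ j, z j * (starRingEnd ℂ) (z j)) (∑ j, u j * (starRingEnd ℂ) (u j)) (∑ j, z j * (starRingEnd ℂ) (u j)) (∑ j, (starRingEnd ℂ) (z j) * u j) g) := by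
        rw [Fin.sum_univ_four]
        simp only [Fin.sum_univ_four]
        rw [kV00, kV01, kV02, kV03, kV10, kV11, kV12, kV13, kV20, kV21, kV22, kV23, kV30, kV31, kV32, kV33]
        rw [pderiv_pderiv_comm (0:Fin 4) 1 g, pderiv_pderiv_comm (0:Fin 4) 2 g,
            pderiv_pderiv_comm (0:Fin 4) 3 g, pderiv_pderiv_comm (1:Fin 4) 2 g,
            pderiv_pderiv_comm (1:Fin 4) 3 g, pderiv_pderiv_comm (2:Fin 4) 3 g]
        simp only [LV, map_add, map_mul, map_neg, map_ofNat, map_zero, map_one,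
          aeval_C, algebraMap_eq, zero_mul, add_zero, zero_add]
        ring

lemma lapW_bridge (n : ℕ) (z u : Fin n → ℂ) (g : MvPolynomial (Fin 4) ℂ) :
    lapW n (aeval (gens n z u) g)
      = aeval (gens n z u) (LW (∑ j, z j * (starRingEnd ℂ) (z j)) (∑ j, u j * (starRingEnd ℂ) (u j)) (∑ j, z j * (starRingEnd ℂ) (u j)) (∑ j, (starRingEnd ℂ) (z j) * u j) g) := by
  have kW00 : (∑ j, (cWL n z u j 0 * cWL n z u j 0 + cWR n z u j 0 * cWR n z u j 0)) = 0 :=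
    Finset.sum_eq_zero (fun j _ => by simp [cVL, cVR, cWL, cWR]; try ring_nf; try simp [Complex.I_sq]; try ring)
  have kW01 : (∑ j, (cWL n z u j 0 * cWL n z u j 1 + cWR n z u j 0 * cWR n z u j 1)) = (2) * (∑ j, z j * (starRingEnd ℂ) (z j)) :=
    sum_pair_eq _ _ _ (fun j => by simp [cVL, cVR, cWL, cWR]; try ring_nf; try simp [Complex.I_sq]; try ring)
  have kW02 : (∑ j, (cWL n z u j 0 * cWL n z u j 2 + cWR n z u j 0 * cWR n z u j 2)) = 0 :=
    Finset.sum_eq_zero (fun j _ => by simp [cVL, cVR, cWL, cWR]; try ring_nf; try simp [Complex.I_sq]; try ring)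
  have kW03 : (∑ j, (cWL n z u j 0 * cWL n z u j 3 + cWR n z u j 0 * cWR n z u j 3)) = (2) * (∑ j, z j * (starRingEnd ℂ) (u j)) :=
    sum_pair_eq _ _ _ (fun j => by simp [cVL, cVR, cWL, cWR]; try ring_nf; try simp [Complex.I_sq]; try ring)
  have kW10 : (∑ j, (cWL n z u j 1 * cWL n z u j 0 + cWR n z u j 1 * cWR n z u j 0)) = (2) * (∑ j, z j * (starRingEnd ℂ) (z j)) :=
    sum_pair_eq _ _ _ (fun j => by simp [cVL, cVR, cWL, cWR]; try ring_nf; try simp [Complex.I_sq]; try ring)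
  have kW11 : (∑ j, (cWL n z u j 1 * cWL n z u j 1 + cWR n z u j 1 * cWR n z u j 1)) = 0 :=
    Finset.sum_eq_zero (fun j _ => by simp [cVL, cVR, cWL, cWR]; try ring_nf; try simp [Complex.I_sq]; try ring)
  have kW12 : (∑ j, (cWL n z u j 1 * cWL n z u j 2 + cWR n z u j 1 * cWR n z u j 2)) = (2) * (∑ j, (starRingEnd ℂ) (z j) * u j) :=
    sum_pair_eq _ _ _ (fun j => by simp [cVL, cVR, cWL, cWR]; try ring_nf; try simp [Complex.I_sq]; try ring)
  have kW13 : (∑ j, (cWL n z u j 1 * cWL n z u j 3 + cWR n z u j 1 * cWR n z u j 3)) = 0 :=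
    Finset.sum_eq_zero (fun j _ => by simp [cVL, cVR, cWL, cWR]; try ring_nf; try simp [Complex.I_sq]; try ring)
  have kW20 : (∑ j, (cWL n z u j 2 * cWL n z u j 0 + cWR n z u j 2 * cWR n z u j 0)) = 0 :=
    Finset.sum_eq_zero (fun j _ => by simp [cVL, cVR, cWL, cWR]; try ring_nf; try simp [Complex.I_sq]; try ring)
  have kW21 : (∑ j, (cWL n z u j 2 * cWL n z u j 1 + cWR n z u j 2 * cWR n z u j 1)) = (2) * (∑ j, (starRingEnd ℂ) (z j) * u j) :=
    sum_pair_eq _ _ _ (fun j => by simp [cVL, cVR, cWL, cWR]; try ring_nf; try simp [Complex.I_sq]; try ring)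
  have kW22 : (∑ j, (cWL n z u j 2 * cWL n z u j 2 + cWR n z u j 2 * cWR n z u j 2)) = 0 :=
    Finset.sum_eq_zero (fun j _ => by simp [cVL, cVR, cWL, cWR]; try ring_nf; try simp [Complex.I_sq]; try ring)
  have kW23 : (∑ j, (cWL n z u j 2 * cWL n z u j 3 + cWR n z u j 2 * cWR n z u j 3)) = (2) * (∑ j, u j * (starRingEnd ℂ) (u j)) :=
    sum_pair_eq _ _ _ (fun j => by simp [cVL, cVR, cWL, cWR]; try ring_nf; try simp [Complex.I_sq]; try ring)
  have kW30 : (∑ j, (cWL n z u j 3 * cWL n z u j 0 + cWR n z u j 3 * cWR n z u j 0)) = (2) * (∑ j, z j * (starRingEnd ℂ) (u j)) :=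
    sum_pair_eq _ _ _ (fun j => by simp [cVL, cVR, cWL, cWR]; try ring_nf; try simp [Complex.I_sq]; try ring)
  have kW31 : (∑ j, (cWL n z u j 3 * cWL n z u j 1 + cWR n z u j 3 * cWR n z u j 1)) = 0 :=
    Finset.sum_eq_zero (fun j _ => by simp [cVL, cVR, cWL, cWR]; try ring_nf; try simp [Complex.I_sq]; try ring)
  have kW32 : (∑ j, (cWL n z u j 3 * cWL n z u j 2 + cWR n z u j 3 * cWR n z u j 2)) = (2) * (∑ j, u j * (starRingEnd ℂ) (u j)) :=
    sum_pair_eq _ _ _ (fun j => by simp [cVL, cVR, cWL, cWR]; try ring_nf; try simp [Complex.I_sq]; try ring)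
  have kW33 : (∑ j, (cWL n z u j 3 * cWL n z u j 3 + cWR n z u j 3 * cWR n z u j 3)) = 0 :=
    Finset.sum_eq_zero (fun j _ => by simp [cVL, cVR, cWL, cWR]; try ring_nf; try simp [Complex.I_sq]; try ring)
  calc lapW n (aeval (gens n z u) g)
      = ∑ j : Fin n, ∑ a, ∑ b, C (cWL n z u j a * cWL n z u j b + cWR n z u j a * cWR n z u j b)
          * aeval (gens n z u) (pderiv b (pderiv a g)) := by
        rw [lapW, sum_fin2n n
          (fun i => pderiv (Sum.inr i) (pderiv (Sum.inr i) (aeval (gens n z u) g)))]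
        refine Finset.sum_congr rfl fun j _ => ?_
        rw [pderiv2_aeval_eq _ _ _ _ _ (pd_wl n z u j) (pd_wl n z u j) g,
            pderiv2_aeval_eq _ _ _ _ _ (pd_wr n z u j) (pd_wr n z u j) g,
            ← Finset.sum_add_distrib]
        refine Finset.sum_congr rfl fun a _ => ?_
        rw [← Finset.sum_add_distrib]
        exact Finset.sum_congr rfl fun b _ => by rw [← add_mul, ← map_add]
    _ = ∑ a, ∑ b, C (∑ j, (cWL n z u j a * cWL n z u j b + cWR n z u j a * cWR n z u j b))
          * aeval (gens n z u) (pderiv b (pderiv a g)) := collect n _ _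
    _ = aeval (gens n z u) (LW (∑ j, z j * (starRingEnd ℂ) (z j)) (∑ j, u j * (starRingEnd ℂ) (u j)) (∑ j, z j * (starRingEnd ℂ) (u j)) (∑ j, (starRingEnd ℂ) (z j) * u j) g) := by
        rw [Fin.sum_univ_four]
        simp only [Fin.sum_univ_four]
        rw [kW00, kW01, kW02, kW03, kW10, kW11, kW12, kW13, kW20, kW21, kW22, kW23, kW30, kW31, kW32, kW33]
        rw [pderiv_pderiv_comm (0:Fin 4) 1 g, pderiv_pderiv_comm (0:Fin 4) 2 g,
            pderiv_pderiv_comm (0:Fin 4) 3 g, pderiv_pderiv_comm (1:Fin 4) 2 g,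
            pderiv_pderiv_comm (1:Fin 4) 3 g, pderiv_pderiv_comm (2:Fin 4) 3 g]
        simp only [LW, map_add, map_mul, map_neg, map_ofNat, map_zero, map_one,
          aeval_C, algebraMap_eq, zero_mul, add_zero, zero_add]
        ring

lemma mixedOp_bridge (n : ℕ) (z u : Fin n → ℂ) (g : MvPolynomial (Fin 4) ℂ) :
    mixedOp n (aeval (gens n z u) g)
      = aeval (gens n z u) (LM (∑ j, z j * (starRingEnd ℂ) (u j)) (∑ j, (starRingEnd ℂ) (z j) * u j) g) := by
  have kM00 : (∑ j, (cVL n z u j 0 * cWL n z u j 0 + cVR n z u j 0 * cWR n z u j 0)) = 0 :=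
    Finset.sum_eq_zero (fun j _ => by simp [cVL, cVR, cWL, cWR]; try ring_nf; try simp [Complex.I_sq]; try ring)
  have kM01 : (∑ j, (cVL n z u j 0 * cWL n z u j 1 + cVR n z u j 0 * cWR n z u j 1)) = (2) * (∑ j, z j * (starRingEnd ℂ) (z j)) :=
    sum_pair_eq _ _ _ (fun j => by simp [cVL, cVR, cWL, cWR]; try ring_nf; try simp [Complex.I_sq]; try ring)
  have kM02 : (∑ j, (cVL n z u j 0 * cWL n z u j 2 + cVR n z u j 0 * cWR n z u j 2)) = 0 :=
    Finset.sum_eq_zero (fun j _ => by simp [cVL, cVR, cWL, cWR]; try ring_nf; try simp [Complex.I_sq]; try ring)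
  have kM03 : (∑ j, (cVL n z u j 0 * cWL n z u j 3 + cVR n z u j 0 * cWR n z u j 3)) = (2) * (∑ j, z j * (starRingEnd ℂ) (u j)) :=
    sum_pair_eq _ _ _ (fun j => by simp [cVL, cVR, cWL, cWR]; try ring_nf; try simp [Complex.I_sq]; try ring)
  have kM10 : (∑ j, (cVL n z u j 1 * cWL n z u j 0 + cVR n z u j 1 * cWR n z u j 0)) = (-2) * (∑ j, z j * (starRingEnd ℂ) (z j)) :=
    sum_pair_eq _ _ _ (fun j => by simp [cVL, cVR, cWL, cWR]; try ring_nf; try simp [Complex.I_sq]; try ring)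
  have kM11 : (∑ j, (cVL n z u j 1 * cWL n z u j 1 + cVR n z u j 1 * cWR n z u j 1)) = 0 :=
    Finset.sum_eq_zero (fun j _ => by simp [cVL, cVR, cWL, cWR]; try ring_nf; try simp [Complex.I_sq]; try ring)
  have kM12 : (∑ j, (cVL n z u j 1 * cWL n z u j 2 + cVR n z u j 1 * cWR n z u j 2)) = (-2) * (∑ j, (starRingEnd ℂ) (z j) * u j) :=
    sum_pair_eq _ _ _ (fun j => by simp [cVL, cVR, cWL, cWR]; try ring_nf; try simp [Complex.I_sq]; try ring)
  have kM13 : (∑ j, (cVL n z u j 1 * cWL n z u j 3 + cVR n z u j 1 * cWR n z u j 3)) = 0 :=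
    Finset.sum_eq_zero (fun j _ => by simp [cVL, cVR, cWL, cWR]; try ring_nf; try simp [Complex.I_sq]; try ring)
  have kM20 : (∑ j, (cVL n z u j 2 * cWL n z u j 0 + cVR n z u j 2 * cWR n z u j 0)) = 0 :=
    Finset.sum_eq_zero (fun j _ => by simp [cVL, cVR, cWL, cWR]; try ring_nf; try simp [Complex.I_sq]; try ring)
  have kM21 : (∑ j, (cVL n z u j 2 * cWL n z u j 1 + cVR n z u j 2 * cWR n z u j 1)) = (-2) * (∑ j, (starRingEnd ℂ) (z j) * u j) :=
    sum_pair_eq _ _ _ (fun j => by simp [cVL, cVR, cWL, cWR]; try ring_nf; try simp [Complex.I_sq]; try ring)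
  have kM22 : (∑ j, (cVL n z u j 2 * cWL n z u j 2 + cVR n z u j 2 * cWR n z u j 2)) = 0 :=
    Finset.sum_eq_zero (fun j _ => by simp [cVL, cVR, cWL, cWR]; try ring_nf; try simp [Complex.I_sq]; try ring)
  have kM23 : (∑ j, (cVL n z u j 2 * cWL n z u j 3 + cVR n z u j 2 * cWR n z u j 3)) = (-2) * (∑ j, u j * (starRingEnd ℂ) (u j)) :=
    sum_pair_eq _ _ _ (fun j => by simp [cVL, cVR, cWL, cWR]; try ring_nf; try simp [Complex.I_sq]; try ring)
  have kM30 : (∑ j, (cVL n z u j 3 * cWL n z u j 0 + cVR n z u j 3 * cWR n z u j 0)) = (2) * (∑ j, z j * (starRingEnd ℂ) (u j)) :=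
    sum_pair_eq _ _ _ (fun j => by simp [cVL, cVR, cWL, cWR]; try ring_nf; try simp [Complex.I_sq]; try ring)
  have kM31 : (∑ j, (cVL n z u j 3 * cWL n z u j 1 + cVR n z u j 3 * cWR n z u j 1)) = 0 :=
    Finset.sum_eq_zero (fun j _ => by simp [cVL, cVR, cWL, cWR]; try ring_nf; try simp [Complex.I_sq]; try ring)
  have kM32 : (∑ j, (cVL n z u j 3 * cWL n z u j 2 + cVR n z u j 3 * cWR n z u j 2)) = (2) * (∑ j, u j * (starRingEnd ℂ) (u j)) :=
    sum_pair_eq _ _ _ (fun j => by simp [cVL, cVR, cWL, cWR]; try ring_nf; try simp [Complex.I_sq]; try ring)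
  have kM33 : (∑ j, (cVL n z u j 3 * cWL n z u j 3 + cVR n z u j 3 * cWR n z u j 3)) = 0 :=
    Finset.sum_eq_zero (fun j _ => by simp [cVL, cVR, cWL, cWR]; try ring_nf; try simp [Complex.I_sq]; try ring)
  calc mixedOp n (aeval (gens n z u) g)
      = ∑ j : Fin n, ∑ a, ∑ b, C (cVL n z u j a * cWL n z u j b + cVR n z u j a * cWR n z u j b)
          * aeval (gens n z u) (pderiv b (pderiv a g)) := by
        rw [mixedOp, sum_fin2n n
          (fun i => pderiv (Sum.inr i) (pderiv (Sum.inl i) (aeval (gens n z u) g)))]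
        refine Finset.sum_congr rfl fun j _ => ?_
        rw [pderiv2_aeval_eq _ _ _ _ _ (pd_vl n z u j) (pd_wl n z u j) g,
            pderiv2_aeval_eq _ _ _ _ _ (pd_vr n z u j) (pd_wr n z u j) g,
            ← Finset.sum_add_distrib]
        refine Finset.sum_congr rfl fun a _ => ?_
        rw [← Finset.sum_add_distrib]
        exact Finset.sum_congr rfl fun b _ => by rw [← add_mul, ← map_add]
    _ = ∑ a, ∑ b, C (∑ j, (cVL n z u j a * cWL n z u j b + cVR n z u j a * cWR n z u j b))
          * aeval (gens n z u) (pderiv b (pderiv a g)) := collect n _ _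
    _ = aeval (gens n z u) (LM (∑ j, z j * (starRingEnd ℂ) (u j)) (∑ j, (starRingEnd ℂ) (z j) * u j) g) := by
        rw [Fin.sum_univ_four]
        simp only [Fin.sum_univ_four]
        rw [kM00, kM01, kM02, kM03, kM10, kM11, kM12, kM13, kM20, kM21, kM22, kM23, kM30, kM31, kM32, kM33]
        rw [pderiv_pderiv_comm (0:Fin 4) 1 g, pderiv_pderiv_comm (0:Fin 4) 2 g,
            pderiv_pderiv_comm (0:Fin 4) 3 g, pderiv_pderiv_comm (1:Fin 4) 2 g,
            pderiv_pderiv_comm (1:Fin 4) 3 g, pderiv_pderiv_comm (2:Fin 4) 3 g]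
        simp only [LM, map_add, map_mul, map_neg, map_ofNat, map_zero, map_one,
          aeval_C, algebraMap_eq, zero_mul, add_zero, zero_add]
        ring

lemma mixedJOp_bridge (n : ℕ) (z u : Fin n → ℂ) (g : MvPolynomial (Fin 4) ℂ) :
    mixedJOp n (aeval (gens n z u) g)
      = aeval (gens n z u) (LJ (∑ j, z j * (starRingEnd ℂ) (z j)) (∑ j, u j * (starRingEnd ℂ) (u j)) g) := by
  have kJ00 : (∑ j, (cVR n z u j 0 * cWL n z u j 0 - cVL n z u j 0 * cWR n z u j 0)) = 0 :=
    Finset.sum_eq_zero (fun j _ => by simp [cVL, cVR, cWL, cWR]; try ring_nf; try simp [Complex.I_sq]; try ring)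
  have kJ01 : (∑ j, (cVR n z u j 0 * cWL n z u j 1 - cVL n z u j 0 * cWR n z u j 1)) = ((-2)*Complex.I) * (∑ j, z j * (starRingEnd ℂ) (z j)) :=
    sum_pair_eq _ _ _ (fun j => by simp [cVL, cVR, cWL, cWR]; try ring_nf; try simp [Complex.I_sq]; try ring)
  have kJ02 : (∑ j, (cVR n z u j 0 * cWL n z u j 2 - cVL n z u j 0 * cWR n z u j 2)) = 0 :=
    Finset.sum_eq_zero (fun j _ => by simp [cVL, cVR, cWL, cWR]; try ring_nf; try simp [Complex.I_sq]; try ring)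
  have kJ03 : (∑ j, (cVR n z u j 0 * cWL n z u j 3 - cVL n z u j 0 * cWR n z u j 3)) = ((-2)*Complex.I) * (∑ j, z j * (starRingEnd ℂ) (u j)) :=
    sum_pair_eq _ _ _ (fun j => by simp [cVL, cVR, cWL, cWR]; try ring_nf; try simp [Complex.I_sq]; try ring)
  have kJ10 : (∑ j, (cVR n z u j 1 * cWL n z u j 0 - cVL n z u j 1 * cWR n z u j 0)) = ((-2)*Complex.I) * (∑ j, z j * (starRingEnd ℂ) (z j)) :=
    sum_pair_eq _ _ _ (fun j => by simp [cVL, cVR, cWL, cWR]; try ring_nf; try simp [Complex.I_sq]; try ring)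
  have kJ11 : (∑ j, (cVR n z u j 1 * cWL n z u j 1 - cVL n z u j 1 * cWR n z u j 1)) = 0 :=
    Finset.sum_eq_zero (fun j _ => by simp [cVL, cVR, cWL, cWR]; try ring_nf; try simp [Complex.I_sq]; try ring)
  have kJ12 : (∑ j, (cVR n z u j 1 * cWL n z u j 2 - cVL n z u j 1 * cWR n z u j 2)) = ((-2)*Complex.I) * (∑ j, (starRingEnd ℂ) (z j) * u j) :=
    sum_pair_eq _ _ _ (fun j => by simp [cVL, cVR, cWL, cWR]; try ring_nf; try simp [Complex.I_sq]; try ring)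
  have kJ13 : (∑ j, (cVR n z u j 1 * cWL n z u j 3 - cVL n z u j 1 * cWR n z u j 3)) = 0 :=
    Finset.sum_eq_zero (fun j _ => by simp [cVL, cVR, cWL, cWR]; try ring_nf; try simp [Complex.I_sq]; try ring)
  have kJ20 : (∑ j, (cVR n z u j 2 * cWL n z u j 0 - cVL n z u j 2 * cWR n z u j 0)) = 0 :=
    Finset.sum_eq_zero (fun j _ => by simp [cVL, cVR, cWL, cWR]; try ring_nf; try simp [Complex.I_sq]; try ring)
  have kJ21 : (∑ j, (cVR n z u j 2 * cWL n z u j 1 - cVL n z u j 2 * cWR n z u j 1)) = ((2)*Complex.I) * (∑ j, (starRingEnd ℂ) (z j) * u j) :=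
    sum_pair_eq _ _ _ (fun j => by simp [cVL, cVR, cWL, cWR]; try ring_nf; try simp [Complex.I_sq]; try ring)
  have kJ22 : (∑ j, (cVR n z u j 2 * cWL n z u j 2 - cVL n z u j 2 * cWR n z u j 2)) = 0 :=
    Finset.sum_eq_zero (fun j _ => by simp [cVL, cVR, cWL, cWR]; try ring_nf; try simp [Complex.I_sq]; try ring)
  have kJ23 : (∑ j, (cVR n z u j 2 * cWL n z u j 3 - cVL n z u j 2 * cWR n z u j 3)) = ((2)*Complex.I) * (∑ j, u j * (starRingEnd ℂ) (u j)) :=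
    sum_pair_eq _ _ _ (fun j => by simp [cVL, cVR, cWL, cWR]; try ring_nf; try simp [Complex.I_sq]; try ring)
  have kJ30 : (∑ j, (cVR n z u j 3 * cWL n z u j 0 - cVL n z u j 3 * cWR n z u j 0)) = ((2)*Complex.I) * (∑ j, z j * (starRingEnd ℂ) (u j)) :=
    sum_pair_eq _ _ _ (fun j => by simp [cVL, cVR, cWL, cWR]; try ring_nf; try simp [Complex.I_sq]; try ring)
  have kJ31 : (∑ j, (cVR n z u j 3 * cWL n z u j 1 - cVL n z u j 3 * cWR n z u j 1)) = 0 :=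
    Finset.sum_eq_zero (fun j _ => by simp [cVL, cVR, cWL, cWR]; try ring_nf; try simp [Complex.I_sq]; try ring)
  have kJ32 : (∑ j, (cVR n z u j 3 * cWL n z u j 2 - cVL n z u j 3 * cWR n z u j 2)) = ((2)*Complex.I) * (∑ j, u j * (starRingEnd ℂ) (u j)) :=
    sum_pair_eq _ _ _ (fun j => by simp [cVL, cVR, cWL, cWR]; try ring_nf; try simp [Complex.I_sq]; try ring)
  have kJ33 : (∑ j, (cVR n z u j 3 * cWL n z u j 3 - cVL n z u j 3 * cWR n z u j 3)) = 0 :=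
    Finset.sum_eq_zero (fun j _ => by simp [cVL, cVR, cWL, cWR]; try ring_nf; try simp [Complex.I_sq]; try ring)
  calc mixedJOp n (aeval (gens n z u) g)
      = ∑ j : Fin n, ∑ a, ∑ b, C (cVR n z u j a * cWL n z u j b - cVL n z u j a * cWR n z u j b)
          * aeval (gens n z u) (pderiv b (pderiv a g)) := by
        rw [mixedJOp]
        refine Finset.sum_congr rfl fun j _ => ?_
        rw [pderiv2_aeval_eq _ _ _ _ _ (pd_vr n z u j) (pd_wl n z u j) g,
            pderiv2_aeval_eq _ _ _ _ _ (pd_vl n z u j) (pd_wr n z u j) g,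
            ← Finset.sum_sub_distrib]
        refine Finset.sum_congr rfl fun a _ => ?_
        rw [← Finset.sum_sub_distrib]
        exact Finset.sum_congr rfl fun b _ => by rw [← sub_mul, ← map_sub]
    _ = ∑ a, ∑ b, C (∑ j, (cVR n z u j a * cWL n z u j b - cVL n z u j a * cWR n z u j b))
          * aeval (gens n z u) (pderiv b (pderiv a g)) := collect n _ _
    _ = aeval (gens n z u) (LJ (∑ j, z j * (starRingEnd ℂ) (z j)) (∑ j, u j * (starRingEnd ℂ) (u j)) g) := by
        rw [Fin.sum_univ_four]
        simp only [Fin.sum_univ_four]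
        rw [kJ00, kJ01, kJ02, kJ03, kJ10, kJ11, kJ12, kJ13, kJ20, kJ21, kJ22, kJ23, kJ30, kJ31, kJ32, kJ33]
        rw [pderiv_pderiv_comm (0:Fin 4) 1 g, pderiv_pderiv_comm (0:Fin 4) 2 g,
            pderiv_pderiv_comm (0:Fin 4) 3 g, pderiv_pderiv_comm (1:Fin 4) 2 g,
            pderiv_pderiv_comm (1:Fin 4) 3 g, pderiv_pderiv_comm (2:Fin 4) 3 g]
        simp only [LJ, map_add, map_mul, map_neg, map_ofNat, map_zero, map_one,
          aeval_C, algebraMap_eq, zero_mul, add_zero, zero_add]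
        ring


def mono (a b c d : ℕ) : MvPolynomial (Fin 4) ℂ :=
  X 0 ^ a * X 1 ^ b * X 2 ^ c * X 3 ^ d

lemma pd0_mono (a b c d : ℕ) :
    pderiv (0 : Fin 4) (mono a b c d) = C (a : ℂ) * mono (a-1) b c d := by
  simp [mono, pderiv_mul, pderiv_pow,
    pderiv_X_of_ne (show (1:Fin 4) ≠ 0 by decide),
    pderiv_X_of_ne (show (2:Fin 4) ≠ 0 by decide),
    pderiv_X_of_ne (show (3:Fin 4) ≠ 0 by decide)]
  ring

lemma pd1_mono (a b c d : ℕ) :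
    pderiv (1 : Fin 4) (mono a b c d) = C (b : ℂ) * mono a (b-1) c d := by
  simp [mono, pderiv_mul, pderiv_pow,
    pderiv_X_of_ne (show (0:Fin 4) ≠ 1 by decide),
    pderiv_X_of_ne (show (2:Fin 4) ≠ 1 by decide),
    pderiv_X_of_ne (show (3:Fin 4) ≠ 1 by decide)]
  ring

lemma pd2_mono (a b c d : ℕ) :
    pderiv (2 : Fin 4) (mono a b c d) = C (c : ℂ) * mono a b (c-1) d := by
  simp [mono, pderiv_mul, pderiv_pow,
    pderiv_X_of_ne (show (0:Fin 4) ≠ 2 by decide),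
    pderiv_X_of_ne (show (1:Fin 4) ≠ 2 by decide),
    pderiv_X_of_ne (show (3:Fin 4) ≠ 2 by decide)]
  ring

lemma pd3_mono (a b c d : ℕ) :
    pderiv (3 : Fin 4) (mono a b c d) = C (d : ℂ) * mono a b c (d-1) := by
  simp [mono, pderiv_mul, pderiv_pow,
    pderiv_X_of_ne (show (0:Fin 4) ≠ 3 by decide),
    pderiv_X_of_ne (show (1:Fin 4) ≠ 3 by decide),
    pderiv_X_of_ne (show (2:Fin 4) ≠ 3 by decide)]
  ring

lemma lapV_C_mul (n : ℕ) (a : ℂ) (F : MvPolynomial (Fin (2*n) ⊕ Fin (2*n)) ℂ) :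
    lapV n (C a * F) = C a * lapV n F := by
  simp [lapV, pderiv_C_mul, Finset.mul_sum]

lemma lapW_C_mul (n : ℕ) (a : ℂ) (F : MvPolynomial (Fin (2*n) ⊕ Fin (2*n)) ℂ) :
    lapW n (C a * F) = C a * lapW n F := by
  simp [lapW, pderiv_C_mul, Finset.mul_sum]

lemma mixedOp_C_mul (n : ℕ) (a : ℂ) (F : MvPolynomial (Fin (2*n) ⊕ Fin (2*n)) ℂ) :
    mixedOp n (C a * F) = C a * mixedOp n F := by
  simp [mixedOp, pderiv_C_mul, Finset.mul_sum]

lemma mixedJOp_C_mul (n : ℕ) (a : ℂ) (F : MvPolynomial (Fin (2*n) ⊕ Fin (2*n)) ℂ) :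
    mixedJOp n (C a * F) = C a * mixedJOp n F := by
  simp [mixedJOp, pderiv_C_mul, Finset.mul_sum, mul_sub]

lemma I1op_eq (n : ℕ) (F : MvPolynomial (Fin (2*n) ⊕ Fin (2*n)) ℂ) :
    I1op n F = lapV n F + lapW n F := by
  rw [I1op, lapV, lapW, ← Finset.sum_add_distrib]

lemma CI_sq {σ : Type*} : (C Complex.I : MvPolynomial σ ℂ) ^ 2 = -1 := by
  rw [← map_pow, Complex.I_sq, map_neg, map_one]

lemma fact_ne (m : ℕ) : ((m.factorial : ℂ)) ≠ 0 :=
  Nat.cast_ne_zero.2 m.factorial_ne_zero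

lemma inv_shuffle (X c : ℂ) (hc : c ≠ 0) : ((c*c) * X)⁻¹ * c * c = X⁻¹ := by
  have h1 : (c*c) ≠ 0 := mul_ne_zero hc hc
  calc ((c*c)*X)⁻¹ * c * c = X⁻¹ * ((c*c) * ((c*c))⁻¹) := by rw [mul_inv]; ring
    _ = X⁻¹ := by rw [mul_inv_cancel₀ h1, mul_one]

lemma inv_shuffle2 (X c d : ℂ) (hc : c ≠ 0) (hd : d ≠ 0) :
    (((c*c)*(d*d)) * X)⁻¹ * c * c * d * d = X⁻¹ := by
  have h1 : (c*c)*(d*d) ≠ 0 := mul_ne_zero (mul_ne_zero hc hc) (mul_ne_zero hd hd)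
  calc (((c*c)*(d*d))*X)⁻¹ * c * c * d * d
      = X⁻¹ * (((c*c)*(d*d)) * (((c*c)*(d*d)))⁻¹) := by rw [mul_inv]; ring
    _ = X⁻¹ := by rw [mul_inv_cancel₀ h1, mul_one]

lemma factP (p q : ℕ) (hp : 1 ≤ p) :
    ((((p-1).factorial : ℂ)) * ((q.factorial : ℂ)) * ((q.factorial : ℂ)) * (((p-1).factorial : ℂ)))⁻¹
      = (((p.factorial : ℂ)) * ((q.factorial : ℂ)) * ((q.factorial : ℂ)) * ((p.factorial : ℂ)))⁻¹
          * (p : ℂ) * (p : ℂ) := by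
  obtain ⟨m, rfl⟩ : ∃ m, p = m + 1 := ⟨p - 1, by omega⟩
  simp only [Nat.add_sub_cancel]
  have h1 : (((m+1).factorial : ℂ)) = ((m:ℂ) + 1) * (m.factorial : ℂ) := by
    rw [Nat.factorial_succ]; push_cast; ring
  rw [h1]
  have h2 : ((m:ℂ) + 1) ≠ 0 := Nat.cast_add_one_ne_zero m
  push_cast
  rw [show ((m:ℂ)+1) * (m.factorial:ℂ) * (q.factorial:ℂ) * (q.factorial:ℂ) * (((m:ℂ)+1) * (m.factorial:ℂ))
      = (((m:ℂ)+1)*((m:ℂ)+1)) * ((m.factorial:ℂ) * (q.factorial:ℂ) * (q.factorial:ℂ) * (m.factorial:ℂ)) from by ring,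
    ]
  rw [inv_shuffle _ _ h2]

lemma factQ (p q : ℕ) (hq : 1 ≤ q) :
    (((p.factorial : ℂ)) * (((q-1).factorial : ℂ)) * (((q-1).factorial : ℂ)) * ((p.factorial : ℂ)))⁻¹
      = (((p.factorial : ℂ)) * ((q.factorial : ℂ)) * ((q.factorial : ℂ)) * ((p.factorial : ℂ)))⁻¹
          * (q : ℂ) * (q : ℂ) := by
  obtain ⟨m, rfl⟩ : ∃ m, q = m + 1 := ⟨q - 1, by omega⟩
  simp only [Nat.add_sub_cancel]
  have h1 : (((m+1).factorial : ℂ)) = ((m:ℂ) + 1) * (m.factorial : ℂ) := by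
    rw [Nat.factorial_succ]; push_cast; ring
  rw [h1]
  have h2 : ((m:ℂ) + 1) ≠ 0 := Nat.cast_add_one_ne_zero m
  push_cast
  rw [show (p.factorial:ℂ) * (((m:ℂ)+1) * (m.factorial:ℂ)) * (((m:ℂ)+1) * (m.factorial:ℂ)) * (p.factorial:ℂ)
      = (((m:ℂ)+1)*((m:ℂ)+1)) * ((p.factorial:ℂ) * (m.factorial:ℂ) * (m.factorial:ℂ) * (p.factorial:ℂ)) from by ring,
    ]
  rw [inv_shuffle _ _ h2]

lemma factPQ (p q : ℕ) (hp : 1 ≤ p) (hq : 1 ≤ q) :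
    ((((p-1).factorial : ℂ)) * (((q-1).factorial : ℂ)) * (((q-1).factorial : ℂ)) * (((p-1).factorial : ℂ)))⁻¹
      = (((p.factorial : ℂ)) * ((q.factorial : ℂ)) * ((q.factorial : ℂ)) * ((p.factorial : ℂ)))⁻¹
          * (p : ℂ) * (p : ℂ) * (q : ℂ) * (q : ℂ) := by
  obtain ⟨m, rfl⟩ : ∃ m, p = m + 1 := ⟨p - 1, by omega⟩
  obtain ⟨k, rfl⟩ : ∃ k, q = k + 1 := ⟨q - 1, by omega⟩
  simp only [Nat.add_sub_cancel]
  have h1 : (((m+1).factorial : ℂ)) = ((m:ℂ) + 1) * (m.factorial : ℂ) := by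
    rw [Nat.factorial_succ]; push_cast; ring
  have h1' : (((k+1).factorial : ℂ)) = ((k:ℂ) + 1) * (k.factorial : ℂ) := by
    rw [Nat.factorial_succ]; push_cast; ring
  rw [h1, h1']
  have h2 : ((m:ℂ) + 1) ≠ 0 := Nat.cast_add_one_ne_zero m
  have h2' : ((k:ℂ) + 1) ≠ 0 := Nat.cast_add_one_ne_zero k
  push_cast
  rw [show ((m:ℂ)+1) * (m.factorial:ℂ) * (((k:ℂ)+1) * (k.factorial:ℂ)) * (((k:ℂ)+1) * (k.factorial:ℂ)) * (((m:ℂ)+1) * (m.factorial:ℂ))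
      = ((((m:ℂ)+1)*((m:ℂ)+1)) * (((k:ℂ)+1)*((k:ℂ)+1))) * ((m.factorial:ℂ) * (k.factorial:ℂ) * (k.factorial:ℂ) * (m.factorial:ℂ)) from by ring,
    ]
  rw [inv_shuffle2 _ _ _ h2 h2']

lemma hconj (n : ℕ) (z u : Fin n → ℂ) :
    (starRingEnd ℂ) (∑ j, z j * (starRingEnd ℂ) (u j)) = (∑ j, (starRingEnd ℂ) (z j) * u j) := by
  rw [map_sum]
  exact Finset.sum_congr rfl fun j _ => by simp [map_mul]

lemma hfpq (n : ℕ) (z u : Fin n → ℂ) (a b : ℕ) :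
    fpq n z u a b
      = C (((a.factorial : ℂ) * (b.factorial : ℂ) * (b.factorial : ℂ) * (a.factorial : ℂ))⁻¹)
          * aeval (gens n z u) (mono a b b a) := by
  simp [fpq, mono, gens, map_mul, map_pow, aeval_X]
  ring


theorem statement17 (n : ℕ) (hn : 1 ≤ n) (z u : Fin n → ℂ) (p q : ℕ)
    (hp : 1 ≤ p) (hq : 1 ≤ q) :
    I1op n (fpq n z u p q)
        = C (8 : ℂ) *
            (C (∑ j : Fin n, z j * (starRingEnd ℂ) (u j)) * fpq n z u (p - 1) q
              + C ((starRingEnd ℂ) (∑ j : Fin n, z j * (starRingEnd ℂ) (u j))) *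
                  fpq n z u p (q - 1)) ∧
    I2op n (fpq n z u p q)
        = C ((64 : ℂ) *
              ((∑ j : Fin n, z j * (starRingEnd ℂ) (u j)) *
                  (starRingEnd ℂ) (∑ j : Fin n, z j * (starRingEnd ℂ) (u j))
                - (∑ j : Fin n, z j * (starRingEnd ℂ) (z j)) *
                  (∑ j : Fin n, u j * (starRingEnd ℂ) (u j)))) *
            fpq n z u (p - 1) (q - 1) := by
  have hc := hconj n z u
  have cpq : (C (((p.factorial : ℂ) * (q.factorial : ℂ) * (q.factorial : ℂ) * (p.factorial : ℂ))⁻¹)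
      : MvPolynomial (Fin (2*n) ⊕ Fin (2*n)) ℂ) = C (((p.factorial : ℂ) * (q.factorial : ℂ) * (q.factorial : ℂ) * (p.factorial : ℂ))⁻¹) := rfl
  have eP : (C ((((p-1).factorial : ℂ) * (q.factorial : ℂ) * (q.factorial : ℂ) * ((p-1).factorial : ℂ))⁻¹)
        : MvPolynomial (Fin (2*n) ⊕ Fin (2*n)) ℂ)
      = C (((p.factorial : ℂ) * (q.factorial : ℂ) * (q.factorial : ℂ) * (p.factorial : ℂ))⁻¹)
          * C (p:ℂ) * C (p:ℂ) := by
    rw [← map_mul, ← map_mul, ← factP p q hp]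
  have eQ : (C (((p.factorial : ℂ) * ((q-1).factorial : ℂ) * ((q-1).factorial : ℂ) * (p.factorial : ℂ))⁻¹)
        : MvPolynomial (Fin (2*n) ⊕ Fin (2*n)) ℂ)
      = C (((p.factorial : ℂ) * (q.factorial : ℂ) * (q.factorial : ℂ) * (p.factorial : ℂ))⁻¹)
          * C (q:ℂ) * C (q:ℂ) := by
    rw [← map_mul, ← map_mul, ← factQ p q hq]
  have ePQ : (C ((((p-1).factorial : ℂ) * ((q-1).factorial : ℂ) * ((q-1).factorial : ℂ) * ((p-1).factorial : ℂ))⁻¹)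
        : MvPolynomial (Fin (2*n) ⊕ Fin (2*n)) ℂ)
      = C (((p.factorial : ℂ) * (q.factorial : ℂ) * (q.factorial : ℂ) * (p.factorial : ℂ))⁻¹)
          * C (p:ℂ) * C (p:ℂ) * C (q:ℂ) * C (q:ℂ) := by
    rw [← map_mul, ← map_mul, ← map_mul, ← map_mul, ← factPQ p q hp hq]
  constructor
  · rw [hfpq n z u p q, hfpq n z u (p-1) q, hfpq n z u p (q-1), hc, I1op_eq]
    simp only [lapV_C_mul, lapW_C_mul, lapV_bridge, lapW_bridge]
    rw [eP, eQ]
    simp only [LV, LW, pd0_mono, pd1_mono, pd2_mono, pd3_mono, pderiv_C_mul,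
      map_add, map_mul, aeval_C, algebraMap_eq, map_neg, map_ofNat]
    ring
  · rw [hfpq n z u p q, hfpq n z u (p-1) (q-1), hc, I2op]
    simp only [lapV_C_mul, lapW_C_mul, mixedOp_C_mul, mixedJOp_C_mul,
      lapV_bridge, lapW_bridge, mixedOp_bridge, mixedJOp_bridge]
    rw [ePQ]
    simp only [LV, LW, LM, LJ, map_add, pderiv_C_mul, pd0_mono, pd1_mono, pd2_mono,
      pd3_mono]
    simp only [map_add, map_sub, map_mul, map_neg, map_ofNat, aeval_C, algebraMap_eq]
    ring_nf
    simp only [CI_sq]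
    ring



end
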